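/- A/B testing lazy reserves interpolates linearly: let n bidders have i.i.d. bids from an atomless regular distribution on [0, ∞) with CDF F, density f, and Myerson reserve ρ ≥ 0 satisfying φ(ρ) = 0 where φ(v) = v − (1 − F(v))/f(v). For 0 ≤ k ≤ n, let r^k be the reserve vector equal to ρ on the first k coordinates and 0 elsewhere, and RevL(k) = E[RevL(b, r^k)] under the product measure. Then for every k, RevL(k) = (k/n)·RevL(n) + (1 − k/n)·RevL(0). -/

import Mathlib

open MeasureTheory Finset
open scoped Classical ENNReal

noncomputable def lazyWinner {n : ℕ} (b : Fin (n + 1) → ℝ) : Fin (n + 1) :=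
  (Finset.univ.filter fun i => ∀ j, b j ≤ b i).min' (by
    obtain ⟨i, -, hi⟩ := Finset.exists_max_image Finset.univ b ⟨0, Finset.mem_univ 0⟩
    exact ⟨i, Finset.mem_filter.mpr ⟨Finset.mem_univ i, fun j => hi j (Finset.mem_univ j)⟩⟩)

noncomputable def secondMax {n : ℕ} (b : Fin (n + 1) → ℝ) : ℝ :=
  (Finset.univ.erase (lazyWinner b)).fold max 0 b

/-- Revenue of the second price auction with lazy reserves. -/
noncomputable def lazyRev {n : ℕ} (b r : Fin (n + 1) → ℝ) : ℝ :=
  if r (lazyWinner b) ≤ b (lazyWinner b) then max (r (lazyWinner b)) (secondMax b) else 0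

/-- The least-index bidder among those meeting their reserve attaining the highest bid. -/
noncomputable def eagerWinner {n : ℕ} (b r : Fin (n + 1) → ℝ)
    (hS : (Finset.univ.filter fun i => r i ≤ b i).Nonempty) : Fin (n + 1) :=
  ((Finset.univ.filter fun i => r i ≤ b i).filter
      fun i => ∀ k ∈ Finset.univ.filter (fun i => r i ≤ b i), b k ≤ b i).min' (by
    obtain ⟨i, hi, hmax⟩ := Finset.exists_max_image _ b hS
    exact ⟨i, Finset.mem_filter.mpr ⟨hi, hmax⟩⟩)

/-- Revenue of the second price auction with eager reserves. -/
noncomputable def eagerRev {n : ℕ} (b r : Fin (n + 1) → ℝ) : ℝ :=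
  if hS : (Finset.univ.filter fun i => r i ≤ b i).Nonempty then
    max (r (eagerWinner b r hS))
      (((Finset.univ.filter fun i => r i ≤ b i).erase (eagerWinner b r hS)).fold max 0 b)
  else 0

-- winner is a maximizer
lemma lazyWinner_isMax {n : ℕ} (b : Fin (n + 1) → ℝ) (j : Fin (n + 1)) :
    b j ≤ b (lazyWinner b) := by
  have h : lazyWinner b ∈ Finset.univ.filter fun i => ∀ j, b j ≤ b i :=
    Finset.min'_mem _ _
  rw [Finset.mem_filter] at h
  exact h.2 j

lemma lazyWinner_eq_iff {n : ℕ} (b : Fin (n + 1) → ℝ) (i : Fin (n + 1)) :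
    lazyWinner b = i ↔ (∀ j, b j ≤ b i) ∧ ∀ i', (∀ j, b j ≤ b i') → i ≤ i' := by
  constructor
  · rintro rfl
    refine ⟨lazyWinner_isMax b, fun i' hi' => Finset.min'_le _ _ ?_⟩
    exact Finset.mem_filter.mpr ⟨Finset.mem_univ _, hi'⟩
  · rintro ⟨h1, h2⟩
    have hmem : i ∈ Finset.univ.filter fun i => ∀ j, b j ≤ b i :=
      Finset.mem_filter.mpr ⟨Finset.mem_univ _, h1⟩
    refine le_antisymm (Finset.min'_le _ _ hmem) ?_
    apply h2
    exact lazyWinner_isMax b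

lemma lazyWinner_eq_of_inj {n : ℕ} {b : Fin (n + 1) → ℝ} (hb : Function.Injective b)
    {i : Fin (n + 1)} (hi : ∀ j, b j ≤ b i) : lazyWinner b = i :=
  hb (le_antisymm (hi (lazyWinner b)) (lazyWinner_isMax b i))

lemma measurable_lazyWinner {n : ℕ} : Measurable (lazyWinner (n := n)) := by
  apply measurable_to_countable'
  intro i
  have : lazyWinner ⁻¹' {i} = {b : Fin (n+1) → ℝ |
      (∀ j, b j ≤ b i) ∧ ∀ i', (∀ j, b j ≤ b i') → i ≤ i'} := by
    ext b; simp [lazyWinner_eq_iff]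
  rw [this]
  have h1 : MeasurableSet {b : Fin (n+1) → ℝ | ∀ j, b j ≤ b i} := by
    rw [Set.setOf_forall]
    exact MeasurableSet.iInter fun j =>
      measurableSet_le (measurable_pi_apply j) (measurable_pi_apply i)
  have h2 : MeasurableSet {b : Fin (n+1) → ℝ | ∀ i', (∀ j, b j ≤ b i') → i ≤ i'} := by
    rw [Set.setOf_forall]
    refine MeasurableSet.iInter fun i' => ?_
    by_cases h : i ≤ i'
    · simp only [h, imp_true_iff]; exact MeasurableSet.univ
    · have : {b : Fin (n+1) → ℝ | (∀ j, b j ≤ b i') → i ≤ i'} =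
          {b : Fin (n+1) → ℝ | ∀ j, b j ≤ b i'}ᶜ := by
        ext b; simp [h]
      rw [this]
      refine MeasurableSet.compl ?_
      rw [Set.setOf_forall]
      exact MeasurableSet.iInter fun j =>
        measurableSet_le (measurable_pi_apply j) (measurable_pi_apply i')
  exact h1.inter h2

lemma measurable_fold {n : ℕ} (s : Finset (Fin (n+1))) :
    Measurable fun b : Fin (n+1) → ℝ => s.fold max 0 b := by
  induction s using Finset.induction with
  | empty => simpa using measurable_const
  | insert a s ha ih =>
    simp only [Finset.fold_insert ha]
    exact (measurable_pi_apply a).max ih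

lemma measurable_lazyRev {n : ℕ} (r : Fin (n+1) → ℝ) :
    Measurable fun b : Fin (n+1) → ℝ => lazyRev b r := by
  have key : (fun b : Fin (n+1) → ℝ => lazyRev b r) = fun b =>
      ∑ i, if lazyWinner b = i then
        (if r i ≤ b i then max (r i) ((Finset.univ.erase i).fold max 0 b) else 0) else 0 := by
    funext b
    rw [Finset.sum_eq_single (lazyWinner b)]
    · simp [lazyRev, secondMax]
    · intro j _ hj
      simp [Ne.symm hj]
    · simp
  rw [key]
  refine Finset.measurable_sum _ fun i _ => ?_
  refine Measurable.ite (measurable_lazyWinner (measurableSet_singleton i)) ?_ measurable_const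
  exact Measurable.ite (measurableSet_le measurable_const (measurable_pi_apply i))
    (Measurable.max measurable_const (measurable_fold _)) measurable_const

lemma lazyWinner_comp_perm {n : ℕ} {b : Fin (n + 1) → ℝ} (hb : Function.Injective b)
    (σ : Equiv.Perm (Fin (n + 1))) :
    lazyWinner (b ∘ σ) = σ.symm (lazyWinner b) := by
  apply lazyWinner_eq_of_inj (hb.comp σ.injective)
  intro j
  simp only [Function.comp_apply, Equiv.apply_symm_apply]
  exact lazyWinner_isMax b (σ j)

lemma secondMax_comp_perm {n : ℕ} {b : Fin (n + 1) → ℝ} (hb : Function.Injective b)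
    (σ : Equiv.Perm (Fin (n + 1))) : secondMax (b ∘ σ) = secondMax b := by
  unfold secondMax
  rw [lazyWinner_comp_perm hb σ]
  have himg : (Finset.univ.erase (σ.symm (lazyWinner b))).image σ =
      Finset.univ.erase (lazyWinner b) := by
    rw [Finset.image_erase σ.injective, Finset.image_univ_equiv, Equiv.apply_symm_apply]
  calc (Finset.univ.erase (σ.symm (lazyWinner b))).fold max 0 (b ∘ σ)
      = ((Finset.univ.erase (σ.symm (lazyWinner b))).image σ).fold max 0 b := by
        rw [Finset.fold_image (fun x _ y _ h => σ.injective h)]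
    _ = (Finset.univ.erase (lazyWinner b)).fold max 0 b := by rw [himg]

lemma lazyRev_comp_perm {n : ℕ} {b : Fin (n + 1) → ℝ} (hb : Function.Injective b)
    (σ : Equiv.Perm (Fin (n + 1))) (c : ℝ) :
    lazyRev (b ∘ σ) (fun _ => c) = lazyRev b (fun _ => c) := by
  unfold lazyRev
  rw [lazyWinner_comp_perm hb σ, secondMax_comp_perm hb σ]
  simp only [Function.comp_apply, Equiv.apply_symm_apply]

lemma measurable_comp_perm {n : ℕ} (σ : Equiv.Perm (Fin (n + 1))) :
    Measurable fun b : Fin (n + 1) → ℝ => b ∘ σ :=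
  measurable_pi_lambda _ fun i => measurable_pi_apply (σ i)

lemma measurePreserving_comp_perm {n : ℕ} (ν : Measure ℝ) [IsProbabilityMeasure ν]
    (σ : Equiv.Perm (Fin (n + 1))) :
    MeasurePreserving (fun b : Fin (n + 1) → ℝ => b ∘ σ)
      (Measure.pi fun _ => ν) (Measure.pi fun _ => ν) := by
  refine ⟨measurable_comp_perm σ, ?_⟩
  refine (Measure.pi_eq (μ := fun _ : Fin (n + 1) => ν) fun s hs => ?_).symm
  rw [Measure.map_apply (measurable_comp_perm σ) (MeasurableSet.univ_pi hs)]
  have hpre : (fun b : Fin (n + 1) → ℝ => b ∘ σ) ⁻¹' Set.univ.pi s =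
      Set.univ.pi fun i => s (σ.symm i) := by
    ext b
    simp only [Set.mem_preimage, Set.mem_pi, Set.mem_univ, true_imp_iff, Function.comp_apply]
    constructor
    · intro h i; have := h (σ.symm i); rwa [Equiv.apply_symm_apply] at this
    · intro h i; have := h (σ i); rwa [Equiv.symm_apply_apply] at this
  rw [hpre, Measure.pi_pi (fun _ => ν)]
  exact Equiv.prod_comp σ.symm fun i => ν (s i)

lemma ties_null {n : ℕ} (ν : Measure ℝ) [IsProbabilityMeasure ν] [NullSingletonClass ν]
    {i j : Fin (n + 1)} (hij : j ≠ i) :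
    (Measure.pi fun _ : Fin (n + 1) => ν) {b | b i = b j} = 0 := by
  obtain ⟨m, rfl⟩ := Fin.exists_succAbove_eq hij
  set e := MeasurableEquiv.piFinSuccAbove (fun _ : Fin (n + 1) => ℝ) i
  have hmp := measurePreserving_piFinSuccAbove (fun _ : Fin (n + 1) => ν) i
  set M := Measure.pi fun _ : Fin n => ν
  have hT : MeasurableSet {p : ℝ × (Fin n → ℝ) | p.1 = p.2 m} :=
    measurableSet_eq_fun measurable_fst ((measurable_pi_apply m).comp measurable_snd)
  have hpre : {b : Fin (n + 1) → ℝ | b i = b (i.succAbove m)} =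
      e ⁻¹' {p : ℝ × (Fin n → ℝ) | p.1 = p.2 m} := by
    ext b
    simp [e, MeasurableEquiv.piFinSuccAbove, Fin.insertNthEquiv, Fin.removeNth]
  rw [hpre, hmp.measure_preimage hT.nullMeasurableSet]
  rw [Measure.prod_apply hT]
  have hz : ∀ x : ℝ, M {y : Fin n → ℝ | x = y m} = 0 := by
    intro x
    have hset : {y : Fin n → ℝ | x = y m} = {y : Fin n → ℝ | y m = x} := by
      ext y; exact eq_comm
    rw [hset]
    exact Measure.pi_hyperplane (fun _ : Fin n => ν) m x
  simp only [Set.preimage_setOf_eq, hz, lintegral_zero]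

lemma ae_injective {n : ℕ} (ν : Measure ℝ) [IsProbabilityMeasure ν] [NullSingletonClass ν] :
    ∀ᵐ b ∂(Measure.pi fun _ : Fin (n + 1) => ν), Function.Injective b := by
  have h : ∀ᵐ b ∂(Measure.pi fun _ : Fin (n + 1) => ν),
      ∀ i j : Fin (n + 1), j ≠ i → b i ≠ b j := by
    rw [ae_all_iff]
    intro i
    rw [ae_all_iff]
    intro j
    by_cases hij : j = i
    · subst hij; filter_upwards with b h; exact absurd rfl h
    · have := ties_null (n := n) ν hij
      filter_upwards [measure_eq_zero_iff_ae_notMem.mp this] with b hb _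
      exact hb
  filter_upwards [h] with b hb
  intro p q hpq
  by_contra hne
  exact hb q p hne hpq.symm

lemma setLIntegral_winner_eq {n : ℕ} (ν : Measure ℝ) [IsProbabilityMeasure ν] [NullSingletonClass ν]
    (c : ℝ) (i : Fin (n + 1)) :
    ∫⁻ b in {b | lazyWinner b = i}, ENNReal.ofReal (lazyRev b fun _ => c)
        ∂(Measure.pi fun _ : Fin (n + 1) => ν) =
    ∫⁻ b in {b | lazyWinner b = 0}, ENNReal.ofReal (lazyRev b fun _ => c)
        ∂(Measure.pi fun _ : Fin (n + 1) => ν) := by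
  set μ := Measure.pi fun _ : Fin (n + 1) => ν with hμ
  set σ := Equiv.swap (0 : Fin (n + 1)) i with hσ
  have hmp := measurePreserving_comp_perm ν σ
  set g : (Fin (n + 1) → ℝ) → ℝ≥0∞ := fun b => ENNReal.ofReal (lazyRev b fun _ => c) with hg'
  have hg : Measurable g := (measurable_lazyRev _).ennreal_ofReal
  have hW : ∀ j : Fin (n + 1), MeasurableSet {b : Fin (n + 1) → ℝ | lazyWinner b = j} :=
    fun j => measurable_lazyWinner (measurableSet_singleton j)
  rw [← lintegral_indicator (hW i) g, ← lintegral_indicator (hW 0) g]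
  have h1 : ∫⁻ b, Set.indicator {b | lazyWinner b = i} g b ∂μ
      = ∫⁻ b, Set.indicator {b | lazyWinner b = i} g (b ∘ σ) ∂μ :=
    (hmp.lintegral_comp (hg.indicator (hW i))).symm
  rw [h1]
  apply lintegral_congr_ae
  filter_upwards [ae_injective ν] with b hb
  have hgeq : g (b ∘ σ) = g b := by
    simp only [hg']
    rw [lazyRev_comp_perm hb σ c]
  have hweq : lazyWinner (b ∘ σ) = i ↔ lazyWinner b = 0 := by
    rw [lazyWinner_comp_perm hb σ, Equiv.symm_apply_eq, hσ, Equiv.swap_apply_right]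
  simp only [Set.indicator_apply, Set.mem_setOf_eq, hweq, hgeq]

lemma card_filter_val_lt {m k : ℕ} (hk : k ≤ m) :
    ((Finset.univ : Finset (Fin m)).filter fun i : Fin m => (i : ℕ) < k).card = k := by
  have h : ((Finset.univ : Finset (Fin m)).filter fun i : Fin m => (i : ℕ) < k).card
      = (Finset.range k).card := by
    apply Finset.card_bij (fun (i : Fin m) _ => (i : ℕ))
    · intro a ha; simp only [Finset.mem_filter] at ha; simpa using ha.2
    · intro a _ b _ h; exact Fin.val_injective h
    · intro b hb
      simp only [Finset.mem_range] at hb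
      exact ⟨⟨b, lt_of_lt_of_le hb hk⟩, by simp [hb], rfl⟩
  rw [h, Finset.card_range]

theorem ab_testing_lazy_interpolates {n : ℕ} (f : ℝ → ℝ)
    (hf0 : ∀ x, 0 ≤ f x) (hfneg : ∀ x, x < 0 → f x = 0)
    (ν : Measure ℝ) (hν : ν = volume.withDensity fun x => ENNReal.ofReal (f x))
    [IsProbabilityMeasure ν] (hatomless : ∀ x : ℝ, ν {x} = 0)
    (F : ℝ → ℝ) (hF : ∀ x, F x = (ν (Set.Iic x)).toReal)
    (φ : ℝ → ℝ) (hφ : ∀ x, φ x = x - (1 - F x) / f x)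
    (hreg : MonotoneOn φ (Set.Ici 0))
    (ρ : ℝ) (hρ : 0 ≤ ρ) (hφρ : φ ρ = 0)
    (k : ℕ) (hk : k ≤ n + 1) :
    ∫⁻ b, ENNReal.ofReal (lazyRev b fun i => if (i : ℕ) < k then ρ else 0)
        ∂(Measure.pi fun _ : Fin (n + 1) => ν) =
      ((k : ℝ≥0∞) / (n + 1)) *
          ∫⁻ b, ENNReal.ofReal (lazyRev b fun _ => ρ)
            ∂(Measure.pi fun _ : Fin (n + 1) => ν) +
        (1 - (k : ℝ≥0∞) / (n + 1)) *
          ∫⁻ b, ENNReal.ofReal (lazyRev b fun _ => 0)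
            ∂(Measure.pi fun _ : Fin (n + 1) => ν) := by
  haveI : NullSingletonClass ν := ⟨hatomless⟩
  set μ := Measure.pi fun _ : Fin (n + 1) => ν with hμ
  set W : Fin (n + 1) → Set (Fin (n + 1) → ℝ) := fun i => {b | lazyWinner b = i} with hWdef
  have hW : ∀ i, MeasurableSet (W i) :=
    fun i => measurable_lazyWinner (measurableSet_singleton i)
  have hWdisj : Pairwise (Function.onFun Disjoint W) := by
    intro i j hij
    simp only [Function.onFun, hWdef, Set.disjoint_left, Set.mem_setOf_eq]
    intro b hbi hbj
    exact hij (hbi ▸ hbj ▸ rfl)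
  have hWcover : (⋃ i, W i) = Set.univ := by
    ext b; simp only [Set.mem_iUnion, Set.mem_univ, iff_true, hWdef, Set.mem_setOf_eq]
    exact ⟨lazyWinner b, rfl⟩
  have hsplit : ∀ h : (Fin (n + 1) → ℝ) → ℝ≥0∞,
      ∫⁻ b, h b ∂μ = ∑ i, ∫⁻ b in W i, h b ∂μ := by
    intro h
    rw [← setLIntegral_univ, ← hWcover, lintegral_iUnion hW hWdisj, tsum_fintype]
  set Iρ := ∫⁻ b in W 0, ENNReal.ofReal (lazyRev b fun _ => ρ) ∂μ with hIρ
  set I0 := ∫⁻ b in W 0, ENNReal.ofReal (lazyRev b fun _ => (0 : ℝ)) ∂μ with hI0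
  have hswapρ : ∀ i, ∫⁻ b in W i, ENNReal.ofReal (lazyRev b fun _ => ρ) ∂μ = Iρ :=
    fun i => setLIntegral_winner_eq ν ρ i
  have hswap0 : ∀ i, ∫⁻ b in W i, ENNReal.ofReal (lazyRev b fun _ => (0 : ℝ)) ∂μ = I0 :=
    fun i => setLIntegral_winner_eq ν 0 i
  -- LHS computation
  have hkey : ∀ b : Fin (n + 1) → ℝ, (lazyRev b fun i => if (i : ℕ) < k then ρ else 0)
      = if (lazyWinner b : ℕ) < k then lazyRev b (fun _ => ρ) else lazyRev b (fun _ => 0) := by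
    intro b
    by_cases h : (lazyWinner b : ℕ) < k <;> simp [lazyRev, h]
  have hLHS : ∫⁻ b, ENNReal.ofReal (lazyRev b fun i => if (i : ℕ) < k then ρ else 0) ∂μ
      = (k : ℝ≥0∞) * Iρ + ((n + 1 - k : ℕ) : ℝ≥0∞) * I0 := by
    rw [hsplit]
    have hterm : ∀ i : Fin (n + 1),
        ∫⁻ b in W i, ENNReal.ofReal (lazyRev b fun i => if (i : ℕ) < k then ρ else 0) ∂μ
        = if (i : ℕ) < k then Iρ else I0 := by
      intro i
      have : ∫⁻ b in W i, ENNReal.ofReal (lazyRev b fun i => if (i : ℕ) < k then ρ else 0) ∂μ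
          = ∫⁻ b in W i, ENNReal.ofReal
              (if (i : ℕ) < k then lazyRev b (fun _ => ρ) else lazyRev b (fun _ => 0)) ∂μ := by
        apply setLIntegral_congr_fun (hW i)
        intro b hb
        beta_reduce
        rw [hkey b]
        have : lazyWinner b = i := hb
        rw [this]
      rw [this]
      by_cases h : (i : ℕ) < k
      · simp only [h, if_true]; exact hswapρ i
      · simp only [h, if_false]; exact hswap0 i
    rw [Finset.sum_congr rfl fun i _ => hterm i, Finset.sum_ite, Finset.sum_const,
      Finset.sum_const]
    have hc1 : ((Finset.univ : Finset (Fin (n + 1))).filter fun i : Fin (n + 1) => (i : ℕ) < k).card = k :=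
      card_filter_val_lt hk
    have hc2 : ((Finset.univ : Finset (Fin (n + 1))).filter fun i : Fin (n + 1) => ¬(i : ℕ) < k).card
        = n + 1 - k := by
      have := Finset.card_filter_add_card_filter_not
        (s := (Finset.univ : Finset (Fin (n + 1)))) (p := fun i => (i : ℕ) < k)
      rw [hc1, Finset.card_univ, Fintype.card_fin] at this
      omega
    rw [hc1, hc2, nsmul_eq_mul, nsmul_eq_mul]
  have hJρ : ∫⁻ b, ENNReal.ofReal (lazyRev b fun _ => ρ) ∂μ = ((n + 1 : ℕ) : ℝ≥0∞) * Iρ := by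
    rw [hsplit, Finset.sum_congr rfl fun i _ => hswapρ i, Finset.sum_const, Finset.card_univ,
      Fintype.card_fin, nsmul_eq_mul]
  have hJ0 : ∫⁻ b, ENNReal.ofReal (lazyRev b fun _ => (0 : ℝ)) ∂μ = ((n + 1 : ℕ) : ℝ≥0∞) * I0 := by
    rw [hsplit, Finset.sum_congr rfl fun i _ => hswap0 i, Finset.sum_const, Finset.card_univ,
      Fintype.card_fin, nsmul_eq_mul]
  rw [hLHS, hJρ, hJ0]
  have hne0 : ((n : ℝ≥0∞) + 1) ≠ 0 := by simp
  have hnetop : ((n : ℝ≥0∞) + 1) ≠ ⊤ := by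
    simp [ENNReal.add_ne_top]
  have hcast : ((n + 1 : ℕ) : ℝ≥0∞) = (n : ℝ≥0∞) + 1 := by push_cast; ring
  rw [hcast]
  have h1 : (k : ℝ≥0∞) / ((n : ℝ≥0∞) + 1) * (((n : ℝ≥0∞) + 1) * Iρ) = (k : ℝ≥0∞) * Iρ := by
    rw [← mul_assoc, ENNReal.div_mul_cancel hne0 hnetop]
  have h2 : (1 - (k : ℝ≥0∞) / ((n : ℝ≥0∞) + 1)) * (((n : ℝ≥0∞) + 1) * I0)
      = ((n + 1 - k : ℕ) : ℝ≥0∞) * I0 := by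
    have hsub : (1 : ℝ≥0∞) - (k : ℝ≥0∞) / ((n : ℝ≥0∞) + 1)
        = ((n + 1 - k : ℕ) : ℝ≥0∞) / ((n : ℝ≥0∞) + 1) := by
      apply ENNReal.sub_eq_of_eq_add
        ((ENNReal.div_lt_top (ENNReal.natCast_ne_top k) hne0).ne)
      rw [ENNReal.div_add_div_same, ← Nat.cast_add,
        show n + 1 - k + k = n + 1 from by omega, hcast]
      exact (ENNReal.div_self hne0 hnetop).symm
    rw [hsub, ← mul_assoc, ENNReal.div_mul_cancel hne0 hnetop]
  rw [h1, h2]
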